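/- arXiv:nlin/0606059 — 9 statements merged into one kernel-verified Lean document; each statement's English description precedes it below -/
import Mathlib

section
/- Let τ satisfy Fay-like identity (A). Then for all s, x, y and all nonzero complex numbers λ, μ one has 𝗌w⁺(s,x,y;λ) − (1 − λ/μ)·𝗌w⁺(s, x−ℏ[μ⁻¹], y; λ) = λ·v⁺(s,x,y;μ)·𝗌w⁺(s+ℏ, x, y; λ). (This is the relation X[μ]𝗌w⁺ = v⁺(μ)·λe^{ℏ∂ₛ}𝗌w⁺ of computation I in the proof that the Fay-like identities imply the Toda lattice hierarchy, with the exponential factor e^{ξ(x,λ)} cancelled.) -/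
noncomputable section

/-- `shift ℏ x μ` is the sequence `x − ℏ[μ]`, where `[μ]ₙ = μⁿ/n`. -/
def shift (h : ℂ) (x : ℕ+ → ℂ) (μ : ℂ) : ℕ+ → ℂ :=
  fun n => x n - h * (μ ^ (n : ℕ) / (n : ℂ))

/-- Fay-like identity (A). -/
def FayA (h : ℂ) (τ : ℂ → (ℕ+ → ℂ) → (ℕ+ → ℂ) → ℂ) : Prop :=
  ∀ (s : ℂ) (x y : ℕ+ → ℂ) (μ₁ μ₂ : ℂ), μ₁ ≠ 0 → μ₂ ≠ 0 →
    μ₂ * τ s (shift h x μ₁⁻¹) y * τ (s + h) (shift h x μ₂⁻¹) y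
      - μ₁ * τ s (shift h x μ₂⁻¹) y * τ (s + h) (shift h x μ₁⁻¹) y
    = (μ₂ - μ₁) * τ (s + h) x y * τ s (shift h (shift h x μ₁⁻¹) μ₂⁻¹) y

/-- Fay-like identity (B). -/
def FayB (h : ℂ) (τ : ℂ → (ℕ+ → ℂ) → (ℕ+ → ℂ) → ℂ) : Prop :=
  ∀ (s : ℂ) (x y : ℕ+ → ℂ) (ν₁ ν₂ : ℂ), ν₁ ≠ 0 → ν₂ ≠ 0 →
    (ν₁ - ν₂) * τ s x y * τ (s + h) x (shift h (shift h y ν₁) ν₂)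
    = ν₁ * τ (s + h) x (shift h y ν₁) * τ s x (shift h y ν₂)
      - ν₂ * τ (s + h) x (shift h y ν₂) * τ s x (shift h y ν₁)

/-- Fay-like identity (C). -/
def FayC (h : ℂ) (τ : ℂ → (ℕ+ → ℂ) → (ℕ+ → ℂ) → ℂ) : Prop :=
  ∀ (s : ℂ) (x y : ℕ+ → ℂ) (μ ν : ℂ), μ ≠ 0 → ν ≠ 0 →
    μ * (τ s (shift h x μ⁻¹) y * τ s x (shift h y ν)
          - τ s x y * τ s (shift h x μ⁻¹) (shift h y ν))
    = ν * τ (s + h) x (shift h y ν) * τ (s - h) (shift h x μ⁻¹) y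

/-- `𝗌w⁺(s,x,y;λ) = τ(s; x−ℏ[λ⁻¹], y)/τ(s+ℏ; x, y)`. -/
def swp (h : ℂ) (τ : ℂ → (ℕ+ → ℂ) → (ℕ+ → ℂ) → ℂ)
    (s : ℂ) (x y : ℕ+ → ℂ) (lam : ℂ) : ℂ :=
  τ s (shift h x lam⁻¹) y / τ (s + h) x y

/-- `𝘄⁻(s,x,y;λ) = τ(s+ℏ; x, y−ℏ[λ])/τ(s+ℏ; x, y)`. -/
def swm (h : ℂ) (τ : ℂ → (ℕ+ → ℂ) → (ℕ+ → ℂ) → ℂ)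
    (s : ℂ) (x y : ℕ+ → ℂ) (lam : ℂ) : ℂ :=
  τ (s + h) x (shift h y lam) / τ (s + h) x y

/-- `w̃⁺(s,x,y;λ) = τ(s; x−ℏ[λ⁻¹], y)/τ(s; x, y)`. -/
def wtp (h : ℂ) (τ : ℂ → (ℕ+ → ℂ) → (ℕ+ → ℂ) → ℂ)
    (s : ℂ) (x y : ℕ+ → ℂ) (lam : ℂ) : ℂ :=
  τ s (shift h x lam⁻¹) y / τ s x y

/-- `w̃⁻(s,x,y;λ) = τ(s+ℏ; x, y−ℏ[λ])/τ(s; x, y)`. -/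
def wtm (h : ℂ) (τ : ℂ → (ℕ+ → ℂ) → (ℕ+ → ℂ) → ℂ)
    (s : ℂ) (x y : ℕ+ → ℂ) (lam : ℂ) : ℂ :=
  τ (s + h) x (shift h y lam) / τ s x y

/-- `v⁺(s,x,y;μ)`. -/
def vp (h : ℂ) (τ : ℂ → (ℕ+ → ℂ) → (ℕ+ → ℂ) → ℂ)
    (s : ℂ) (x y : ℕ+ → ℂ) (μ : ℂ) : ℂ :=
  μ⁻¹ * τ s (shift h x μ⁻¹) y * τ (s + 2 * h) x y
    / (τ (s + h) x y * τ (s + h) (shift h x μ⁻¹) y)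

/-- `v⁻(s,x,y;ν)`. -/
def vm (h : ℂ) (τ : ℂ → (ℕ+ → ℂ) → (ℕ+ → ℂ) → ℂ)
    (s : ℂ) (x y : ℕ+ → ℂ) (ν : ℂ) : ℂ :=
  ν * τ (s + h) x (shift h y ν) * τ (s - h) x y
    / (τ s x y * τ s x (shift h y ν))

/-- Computation I: `X[μ]𝗌w⁺ = v⁺(μ)·λe^{ℏ∂ₛ}𝗌w⁺`. -/
theorem fay_A_implies_computation_I
    (h : ℂ) (hh : h ≠ 0)
    (τ : ℂ → (ℕ+ → ℂ) → (ℕ+ → ℂ) → ℂ) (hτ : ∀ s x y, τ s x y ≠ 0)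
    (hA : FayA h τ)
    (s : ℂ) (x y : ℕ+ → ℂ) (lam μ : ℂ) (hlam : lam ≠ 0) (hμ : μ ≠ 0) :
    swp h τ s x y lam - (1 - lam / μ) * swp h τ s (shift h x μ⁻¹) y lam
      = lam * vp h τ s x y μ * swp h τ (s + h) x y lam := by
  have hcomm : shift h (shift h x μ⁻¹) lam⁻¹ = shift h (shift h x lam⁻¹) μ⁻¹ := by
    funext n; simp only [shift]; ring
  have key := hA s x y lam μ hlam hμ
  unfold swp vp
  rw [hcomm, show s + h + h = s + 2 * h from by ring]
  set A := τ s (shift h x lam⁻¹) y with hA1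
  set B := τ (s + h) x y with hB1
  set C := τ s (shift h (shift h x lam⁻¹) μ⁻¹) y with hC1
  set D := τ (s + h) (shift h x μ⁻¹) y with hD1
  set E := τ (s + 2 * h) x y with hE1
  set F := τ (s + h) (shift h x lam⁻¹) y with hF1
  set G := τ s (shift h x μ⁻¹) y with hG1
  have h1 : A ≠ 0 := hτ _ _ _
  have h2 : B ≠ 0 := hτ _ _ _
  have h3 : C ≠ 0 := hτ _ _ _
  have h4 : D ≠ 0 := hτ _ _ _
  have h5 : E ≠ 0 := hτ _ _ _
  have h6 : F ≠ 0 := hτ _ _ _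
  have h7 : G ≠ 0 := hτ _ _ _
  field_simp
  linear_combination key
end
end

section
/- Let τ satisfy Fay-like identity (C). Then for all s, x, y and all nonzero complex numbers λ, μ one has 𝘄⁻(s,x,y;λ) − 𝘄⁻(s, x−ℏ[μ⁻¹], y; λ) = λ·v⁺(s,x,y;μ)·𝘄⁻(s+ℏ, x, y; λ). (This is the relation X[μ]𝘄⁻ = v⁺(μ)·λe^{ℏ∂ₛ}𝘄⁻ of computation II in the proof that the Fay-like identities imply the Toda lattice hierarchy.) -/
noncomputable section

/-- Computation II: `X[μ]𝘄⁻ = v⁺(μ)·λe^{ℏ∂ₛ}𝘄⁻`. -/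
theorem fay_C_implies_computation_II
    (h : ℂ) (hh : h ≠ 0)
    (τ : ℂ → (ℕ+ → ℂ) → (ℕ+ → ℂ) → ℂ) (hτ : ∀ s x y, τ s x y ≠ 0)
    (hC : FayC h τ)
    (s : ℂ) (x y : ℕ+ → ℂ) (lam μ : ℂ) (hlam : lam ≠ 0) (hμ : μ ≠ 0) :
    swm h τ s x y lam - swm h τ s (shift h x μ⁻¹) y lam
      = lam * vp h τ s x y μ * swm h τ (s + h) x y lam := by
  have key := hC (s + h) x y μ lam hμ hlam
  have e1 : s + h + h = s + 2 * h := by ring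
  have e2 : s + h - h = s := by ring
  rw [e1, e2] at key
  rw [swm, swm, swm, vp, e1]
  have h1 := hτ (s + h) x y
  have h2 := hτ (s + h) (shift h x μ⁻¹) y
  have h3 := hτ (s + 2 * h) x y
  set a := τ (s + h) x y
  set b := τ (s + h) (shift h x μ⁻¹) y
  set c := τ (s + h) x (shift h y lam)
  set d := τ (s + h) (shift h x μ⁻¹) (shift h y lam)
  set e := τ (s + 2 * h) x y
  set f := τ (s + 2 * h) x (shift h y lam)
  set g := τ s (shift h x μ⁻¹) y
  field_simp
  linear_combination key
end
end

section
/- Let τ satisfy Fay-like identity (C). Then for all s, x, y and all nonzero complex numbers λ, ν one has w̃⁺(s,x,y;λ) − w̃⁺(s, x, y−ℏ[ν]; λ) = λ⁻¹·v⁻(s,x,y;ν)·w̃⁺(s−ℏ, x, y; λ). (This is the relation Y[ν]w̃⁺ = v⁻(ν)·λ⁻¹e^{−ℏ∂ₛ}w̃⁺ of computation III in the proof that the Fay-like identities imply the Toda lattice hierarchy.) -/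
noncomputable section

/-- Computation III: `Y[ν]w̃⁺ = v⁻(ν)·λ⁻¹e^{−ℏ∂ₛ}w̃⁺`. -/
theorem fay_C_implies_computation_III
    (h : ℂ) (hh : h ≠ 0)
    (τ : ℂ → (ℕ+ → ℂ) → (ℕ+ → ℂ) → ℂ) (hτ : ∀ s x y, τ s x y ≠ 0)
    (hC : FayC h τ)
    (s : ℂ) (x y : ℕ+ → ℂ) (lam ν : ℂ) (hlam : lam ≠ 0) (hν : ν ≠ 0) :
    wtp h τ s x y lam - wtp h τ s x (shift h y ν) lam
      = lam⁻¹ * vm h τ s x y ν * wtp h τ (s - h) x y lam := by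
  have key := hC s x y lam ν hlam hν
  unfold wtp vm
  set A := τ s (shift h x lam⁻¹) y
  set B := τ s x y
  set C := τ s x (shift h y ν)
  set D := τ s (shift h x lam⁻¹) (shift h y ν)
  set E := τ (s + h) x (shift h y ν)
  set F := τ (s - h) (shift h x lam⁻¹) y
  set G := τ (s - h) x y
  have hB : B ≠ 0 := hτ _ _ _
  have hC' : C ≠ 0 := hτ _ _ _
  have hG : G ≠ 0 := hτ _ _ _
  have hBC : B * C ≠ 0 := mul_ne_zero hB hC'
  have R : lam⁻¹ * (ν * E * G / (B * C)) * (F / G) = ν * E * F / (lam * (B * C)) := by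
    field_simp
  rw [div_sub_div _ _ hB hC', R, div_eq_div_iff hBC (mul_ne_zero hlam hBC)]
  linear_combination B * C * key
end
end

section
/- Let τ satisfy Fay-like identity (B). Then for all s, x, y and all nonzero complex numbers λ, ν one has w̃⁻(s,x,y;λ) − (1 − ν/λ)·w̃⁻(s, x, y−ℏ[ν]; λ) = λ⁻¹·v⁻(s,x,y;ν)·w̃⁻(s−ℏ, x, y; λ). (This is the relation Y[ν]w̃⁻ = v⁻(ν)·λ⁻¹e^{−ℏ∂ₛ}w̃⁻ of computation IV in the proof that the Fay-like identities imply the Toda lattice hierarchy, with the exponential factor e^{ξ(y,λ⁻¹)} cancelled.) -/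
noncomputable section

/-- Computation IV: `Y[ν]w̃⁻ = v⁻(ν)·λ⁻¹e^{−ℏ∂ₛ}w̃⁻`. -/
theorem fay_B_implies_computation_IV
    (h : ℂ) (hh : h ≠ 0)
    (τ : ℂ → (ℕ+ → ℂ) → (ℕ+ → ℂ) → ℂ) (hτ : ∀ s x y, τ s x y ≠ 0)
    (hB : FayB h τ)
    (s : ℂ) (x y : ℕ+ → ℂ) (lam ν : ℂ) (hlam : lam ≠ 0) (hν : ν ≠ 0) :
    wtm h τ s x y lam - (1 - ν / lam) * wtm h τ s x (shift h y ν) lam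
      = lam⁻¹ * vm h τ s x y ν * wtm h τ (s - h) x y lam := by
  have hcomm : shift h (shift h y lam) ν = shift h (shift h y ν) lam := by
    funext n; simp [shift]; ring
  have key := hB s x y lam ν hlam hν
  rw [hcomm] at key
  simp only [wtm, vm]
  have h1 := hτ s x y
  have h2 := hτ s x (shift h y ν)
  have h3 := hτ (s - h) x y
  have h4 : s - h + h = s := by ring
  rw [h4]
  rw [show (1 : ℂ) - ν / lam = (lam - ν) / lam from by field_simp,
    div_mul_div_comm, div_sub_div _ _ h1 (mul_ne_zero hlam h2),
    inv_mul_eq_div, div_div, div_mul_div_comm,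
    div_eq_div_iff (mul_ne_zero h1 (mul_ne_zero hlam h2))
      (mul_ne_zero (mul_ne_zero (mul_ne_zero h1 h2) hlam) h3)]
  linear_combination (-(τ s x y * τ s x (shift h y ν) * lam * τ (s - h) x y)) * key
end
end

section
/- Let τ satisfy Fay-like identity (A), and for nonzero λ, μ define the twisted difference operator (X_{μ,λ}f)(s,x,y) := f(s,x,y) − (1−λ/μ)·f(s, x−ℏ[μ⁻¹], y) acting on functions of (s,x,y). Then the twice-iterated operator applied to 𝗌w⁺ satisfies: X_{μ,λ}(X_{μ,λ}𝗌w⁺)(s,x,y;λ) = q₂,₁(s,x,y)·λ·𝗌w⁺(s+ℏ, x, y; λ) + q₂,₂(s,x,y)·λ²·𝗌w⁺(s+2ℏ, x, y; λ), where q₂,₁(s,x,y) = v⁺(s,x,y;μ) − v⁺(s, x−ℏ[μ⁻¹], y; μ) and q₂,₂(s,x,y) = v⁺(s, x−ℏ[μ⁻¹], y; μ)·v⁺(s+ℏ, x, y; μ). -/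
noncomputable section

/-- The twisted difference operator `X_{μ,λ}`. -/
def Xtw (h μ lam : ℂ) (f : ℂ → (ℕ+ → ℂ) → (ℕ+ → ℂ) → ℂ) :
    ℂ → (ℕ+ → ℂ) → (ℕ+ → ℂ) → ℂ :=
  fun s x y => f s x y - (1 - lam / μ) * f s (shift h x μ⁻¹) y


lemma shift_comm (h : ℂ) (x : ℕ+ → ℂ) (a b : ℂ) :
    shift h (shift h x a) b = shift h (shift h x b) a := by
  funext n; simp [shift]; ring

lemma key_step (h : ℂ) (τ : ℂ → (ℕ+ → ℂ) → (ℕ+ → ℂ) → ℂ)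
    (hτ : ∀ s x y, τ s x y ≠ 0) (hA : FayA h τ)
    (lam μ : ℂ) (hlam : lam ≠ 0) (hμ : μ ≠ 0)
    (s : ℂ) (x y : ℕ+ → ℂ) :
    Xtw h μ lam (fun s x y => swp h τ s x y lam) s x y
      = vp h τ s x y μ * lam * swp h τ (s + h) x y lam := by
  have H := hA s x y lam μ hlam hμ
  rw [shift_comm] at H
  simp only [Xtw, swp, vp]
  have e2 : s + h + h = s + 2 * h := by ring
  rw [e2]
  have h1 := hτ (s + h) x y
  have h2 := hτ (s + h) (shift h x μ⁻¹) y
  have h3 := hτ (s + 2 * h) x y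
  set a := τ s (shift h x lam⁻¹) y
  set b := τ (s + h) x y
  set c := τ s (shift h x μ⁻¹) y
  set d := τ (s + h) (shift h x lam⁻¹) y
  set e := τ (s + h) (shift h x μ⁻¹) y
  set f := τ s (shift h (shift h x μ⁻¹) lam⁻¹) y
  set g := τ (s + 2 * h) x y
  field_simp
  linear_combination H

/-- The twice-iterated twisted difference operator applied to `𝗌w⁺`. -/
theorem fay_A_implies_iterated_X_squared
    (h : ℂ) (hh : h ≠ 0)
    (τ : ℂ → (ℕ+ → ℂ) → (ℕ+ → ℂ) → ℂ) (hτ : ∀ s x y, τ s x y ≠ 0)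
    (hA : FayA h τ)
    (s : ℂ) (x y : ℕ+ → ℂ) (lam μ : ℂ) (hlam : lam ≠ 0) (hμ : μ ≠ 0) :
    Xtw h μ lam (Xtw h μ lam (fun s x y => swp h τ s x y lam)) s x y
      = (vp h τ s x y μ - vp h τ s (shift h x μ⁻¹) y μ)
          * lam * swp h τ (s + h) x y lam
        + (vp h τ s (shift h x μ⁻¹) y μ * vp h τ (s + h) x y μ)
          * lam ^ 2 * swp h τ (s + 2 * h) x y lam := by
  have A := key_step h τ hτ hA lam μ hlam hμ s x y
  have B := key_step h τ hτ hA lam μ hlam hμ s (shift h x μ⁻¹) y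
  have C := key_step h τ hτ hA lam μ hlam hμ (s + h) x y
  simp only [Xtw] at A B C ⊢
  have e2 : s + h + h = s + 2 * h := by ring
  rw [e2] at C
  linear_combination A - (1 - lam / μ) * B
    + vp h τ s (shift h x μ⁻¹) y μ * lam * C
end
end

section
/- Let τ satisfy Fay-like identities (A) and (C). Fix a nonzero complex number μ and define, for nonzero λ, the twisted difference operator (X_{μ,λ}f)(s,x,y) := f(s,x,y) − (1−λ/μ)·f(s, x−ℏ[μ⁻¹], y) and the untwisted difference operator (X_μ g)(s,x,y) := g(s,x,y) − g(s, x−ℏ[μ⁻¹], y). Then for every n ≥ 1 there exist functions q_{n,1}, …, q_{n,n} of (s, x, y), independent of λ, such that for all nonzero λ simultaneously: (X_{μ,λ})ⁿ𝗌w⁺(s,x,y;λ) = Σ_{k=1}^{n} q_{n,k}(s,x,y)·λᵏ·𝗌w⁺(s+kℏ, x, y; λ) and (X_μ)ⁿ𝘄⁻(s,x,y;λ) = Σ_{k=1}^{n} q_{n,k}(s,x,y)·λᵏ·𝘄⁻(s+kℏ, x, y; λ), with the same coefficient functions q_{n,k} in both relations. -/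
noncomputable section

/-- The untwisted difference operator `X_μ`. -/
def Xun (h μ : ℂ) (g : ℂ → (ℕ+ → ℂ) → (ℕ+ → ℂ) → ℂ) :
    ℂ → (ℕ+ → ℂ) → (ℕ+ → ℂ) → ℂ :=
  fun s x y => g s x y - g s (shift h x μ⁻¹) y

lemma key_swp (h : ℂ) (τ : ℂ → (ℕ+ → ℂ) → (ℕ+ → ℂ) → ℂ)
    (hτ : ∀ s x y, τ s x y ≠ 0) (hA : FayA h τ)
    (μ : ℂ) (hμ : μ ≠ 0) (lam : ℂ) (hlam : lam ≠ 0) (s : ℂ) (x y : ℕ+ → ℂ) :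
    swp h τ s x y lam - (1 - lam / μ) * swp h τ s (shift h x μ⁻¹) y lam
      = lam * vp h τ s x y μ * swp h τ (s + h) x y lam := by
  have hA1 := hA s x y lam μ hlam hμ
  rw [shift_comm h x lam⁻¹ μ⁻¹] at hA1
  have e1 : s + h + h = s + 2*h := by ring
  simp only [swp, vp, e1]
  set a1 := τ s (shift h x lam⁻¹) y
  set a2 := τ (s+h) x y with ha2
  set a3 := τ s (shift h (shift h x μ⁻¹) lam⁻¹) y
  set a4 := τ (s+h) (shift h x μ⁻¹) y with ha4
  set a5 := τ s (shift h x μ⁻¹) y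
  set a6 := τ (s+2*h) x y with ha6
  set a7 := τ (s+h) (shift h x lam⁻¹) y
  have h2 : a2 ≠ 0 := hτ _ _ _
  have h4 : a4 ≠ 0 := hτ _ _ _
  have h6 : a6 ≠ 0 := hτ _ _ _
  field_simp
  linear_combination hA1

lemma key_swm (h : ℂ) (τ : ℂ → (ℕ+ → ℂ) → (ℕ+ → ℂ) → ℂ)
    (hτ : ∀ s x y, τ s x y ≠ 0) (hC : FayC h τ)
    (μ : ℂ) (hμ : μ ≠ 0) (lam : ℂ) (hlam : lam ≠ 0) (s : ℂ) (x y : ℕ+ → ℂ) :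
    swm h τ s x y lam - swm h τ s (shift h x μ⁻¹) y lam
      = lam * vp h τ s x y μ * swm h τ (s + h) x y lam := by
  have hC1 := hC (s+h) x y μ lam hμ hlam
  have e1 : s + h + h = s + 2*h := by ring
  have e2 : s + h - h = s := by ring
  rw [e1, e2] at hC1
  simp only [swm, vp, e1]
  set a1 := τ (s+h) x (shift h y lam)
  set a2 := τ (s+h) x y
  set a3 := τ (s+h) (shift h x μ⁻¹) (shift h y lam)
  set a4 := τ (s+h) (shift h x μ⁻¹) y
  set a5 := τ s (shift h x μ⁻¹) y
  set a6 := τ (s+2*h) x y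
  set a7 := τ (s+2*h) x (shift h y lam)
  have h2 : a2 ≠ 0 := hτ _ _ _
  have h4 : a4 ≠ 0 := hτ _ _ _
  have h6 : a6 ≠ 0 := hτ _ _ _
  field_simp
  linear_combination hC1

/-- Coefficients `q_{n,k}` (independent of `λ`). -/
def qc (h μ : ℂ) (τ : ℂ → (ℕ+ → ℂ) → (ℕ+ → ℂ) → ℂ) :
    ℕ → ℕ → ℂ → (ℕ+ → ℂ) → (ℕ+ → ℂ) → ℂ
  | 0, 0 => fun _ _ _ => 1
  | 0, _ + 1 => fun _ _ _ => 0
  | n + 1, 0 => fun s x y => qc h μ τ n 0 s x y - qc h μ τ n 0 s (shift h x μ⁻¹) y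
  | n + 1, k + 1 => fun s x y =>
      (qc h μ τ n (k + 1) s x y - qc h μ τ n (k + 1) s (shift h x μ⁻¹) y)
        + qc h μ τ n k s (shift h x μ⁻¹) y * vp h τ (s + (k : ℂ) * h) x y μ

lemma qc_zero_of_lt (h μ : ℂ) (τ : ℂ → (ℕ+ → ℂ) → (ℕ+ → ℂ) → ℂ) :
    ∀ n k, n < k → ∀ s x y, qc h μ τ n k s x y = 0 := by
  intro n
  induction n with
  | zero =>
    intro k hk s x y
    match k, hk with
    | k + 1, _ => simp [qc]
  | succ n ih =>
    intro k hk s x y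
    match k, hk with
    | k + 1, hk =>
      have h1 := ih (k + 1) (by omega)
      have h2 := ih k (by omega)
      simp [qc, h1, h2]

lemma qc_zero_zero (h μ : ℂ) (τ : ℂ → (ℕ+ → ℂ) → (ℕ+ → ℂ) → ℂ) :
    ∀ n, 1 ≤ n → ∀ s x y, qc h μ τ n 0 s x y = 0 := by
  intro n
  induction n with
  | zero => omega
  | succ n ih =>
    intro _ s x y
    have e : qc h μ τ (n + 1) 0 s x y
        = qc h μ τ n 0 s x y - qc h μ τ n 0 s (shift h x μ⁻¹) y := rfl
    rw [e]
    rcases Nat.eq_zero_or_pos n with h0 | h1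
    · subst h0; simp [qc]
    · rw [ih h1, ih h1]; ring

/-- Generic difference operator. -/
def Xop (h μ t : ℂ) (f : ℂ → (ℕ+ → ℂ) → (ℕ+ → ℂ) → ℂ) :
    ℂ → (ℕ+ → ℂ) → (ℕ+ → ℂ) → ℂ :=
  fun s x y => f s x y - t * f s (shift h x μ⁻¹) y

lemma gen_expand (h μ lam t : ℂ) (τ : ℂ → (ℕ+ → ℂ) → (ℕ+ → ℂ) → ℂ)
    (W : ℂ → (ℕ+ → ℂ) → (ℕ+ → ℂ) → ℂ)
    (hkey : ∀ s x y, W s x y - t * W s (shift h x μ⁻¹) y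
        = lam * vp h τ s x y μ * W (s + h) x y) :
    ∀ (n : ℕ) (s : ℂ) (x y : ℕ+ → ℂ),
      (Xop h μ t)^[n] W s x y
        = ∑ k ∈ Finset.range (n + 1),
            qc h μ τ n k s x y * lam ^ k * W (s + (k : ℂ) * h) x y := by
  intro n
  induction n with
  | zero => intro s x y; simp [qc]
  | succ n ih =>
    intro s x y
    rw [Function.iterate_succ_apply']
    show ((Xop h μ t)^[n] W) s x y - t * ((Xop h μ t)^[n] W) s (shift h x μ⁻¹) y = _
    rw [ih s x y, ih s (shift h x μ⁻¹) y]
    set xm := shift h x μ⁻¹ with hxm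
    have step : ∀ k ∈ Finset.range (n + 1),
        qc h μ τ n k s x y * lam ^ k * W (s + (k : ℂ) * h) x y
          - t * (qc h μ τ n k s xm y * lam ^ k * W (s + (k : ℂ) * h) xm y)
        = (qc h μ τ n k s x y - qc h μ τ n k s xm y) * lam ^ k * W (s + (k : ℂ) * h) x y
          + qc h μ τ n k s xm y * vp h τ (s + (k : ℂ) * h) x y μ * lam ^ (k + 1)
              * W (s + ((k + 1 : ℕ) : ℂ) * h) x y := by
      intro k _
      have hk := hkey (s + (k : ℂ) * h) x y
      push_cast
      have e : s + ((k : ℂ) + 1) * h = s + (k : ℂ) * h + h := by ring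
      rw [e]
      linear_combination (qc h μ τ n k s xm y * lam ^ k) * hk
    have hL1 : (∑ k ∈ Finset.range (n + 1), qc h μ τ n k s x y * lam ^ k * W (s + (k : ℂ) * h) x y)
          - t * ∑ k ∈ Finset.range (n + 1), qc h μ τ n k s xm y * lam ^ k * W (s + (k : ℂ) * h) xm y
        = ∑ k ∈ Finset.range (n + 1),
            (qc h μ τ n k s x y * lam ^ k * W (s + (k : ℂ) * h) x y
              - t * (qc h μ τ n k s xm y * lam ^ k * W (s + (k : ℂ) * h) xm y)) := by
      rw [Finset.mul_sum, Finset.sum_sub_distrib]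
    have hL2 := Finset.sum_congr rfl step
    have hsplit : ∑ k ∈ Finset.range (n + 1),
          ((qc h μ τ n k s x y - qc h μ τ n k s xm y) * lam ^ k * W (s + (k : ℂ) * h) x y
            + qc h μ τ n k s xm y * vp h τ (s + (k : ℂ) * h) x y μ * lam ^ (k + 1)
                * W (s + ((k + 1 : ℕ) : ℂ) * h) x y)
        = (∑ k ∈ Finset.range (n + 1),
              (qc h μ τ n k s x y - qc h μ τ n k s xm y) * lam ^ k * W (s + (k : ℂ) * h) x y)
          + ∑ k ∈ Finset.range (n + 1),
              qc h μ τ n k s xm y * vp h τ (s + (k : ℂ) * h) x y μ * lam ^ (k + 1)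
                * W (s + ((k + 1 : ℕ) : ℂ) * h) x y := Finset.sum_add_distrib
    have hR : ∑ k ∈ Finset.range (n + 2),
          qc h μ τ (n + 1) k s x y * lam ^ k * W (s + (k : ℂ) * h) x y
        = (∑ k ∈ Finset.range (n + 1),
            qc h μ τ (n + 1) (k + 1) s x y * lam ^ (k + 1) * W (s + ((k + 1 : ℕ) : ℂ) * h) x y)
          + qc h μ τ (n + 1) 0 s x y * lam ^ 0 * W (s + ((0 : ℕ) : ℂ) * h) x y :=
      Finset.sum_range_succ'
        (fun k => qc h μ τ (n + 1) k s x y * lam ^ k * W (s + (k : ℂ) * h) x y) (n + 1)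
    have hck : ∀ k ∈ Finset.range (n + 1),
        qc h μ τ (n + 1) (k + 1) s x y * lam ^ (k + 1) * W (s + ((k + 1 : ℕ) : ℂ) * h) x y
          = (qc h μ τ n (k + 1) s x y - qc h μ τ n (k + 1) s xm y) * lam ^ (k + 1)
              * W (s + ((k + 1 : ℕ) : ℂ) * h) x y
            + qc h μ τ n k s xm y * vp h τ (s + (k : ℂ) * h) x y μ * lam ^ (k + 1)
                * W (s + ((k + 1 : ℕ) : ℂ) * h) x y := by
      intro k _
      simp only [qc]
      ring
    have hsumc := Finset.sum_congr rfl hck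
    have hA2 : ∑ k ∈ Finset.range (n + 2),
          (qc h μ τ n k s x y - qc h μ τ n k s xm y) * lam ^ k * W (s + (k : ℂ) * h) x y
        = (∑ k ∈ Finset.range (n + 1),
            (qc h μ τ n k s x y - qc h μ τ n k s xm y) * lam ^ k * W (s + (k : ℂ) * h) x y)
          + (qc h μ τ n (n + 1) s x y - qc h μ τ n (n + 1) s xm y) * lam ^ (n + 1)
              * W (s + ((n + 1 : ℕ) : ℂ) * h) x y :=
      Finset.sum_range_succ
        (fun k => (qc h μ τ n k s x y - qc h μ τ n k s xm y) * lam ^ k * W (s + (k : ℂ) * h) x y)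
        (n + 1)
    have hA3 : ∑ k ∈ Finset.range (n + 2),
          (qc h μ τ n k s x y - qc h μ τ n k s xm y) * lam ^ k * W (s + (k : ℂ) * h) x y
        = (∑ k ∈ Finset.range (n + 1),
            (qc h μ τ n (k + 1) s x y - qc h μ τ n (k + 1) s xm y) * lam ^ (k + 1)
              * W (s + ((k + 1 : ℕ) : ℂ) * h) x y)
          + (qc h μ τ n 0 s x y - qc h μ τ n 0 s xm y) * lam ^ 0 * W (s + ((0 : ℕ) : ℂ) * h) x y :=
      Finset.sum_range_succ'
        (fun k => (qc h μ τ n k s x y - qc h μ τ n k s xm y) * lam ^ k * W (s + (k : ℂ) * h) x y)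
        (n + 1)
    have hAn : (qc h μ τ n (n + 1) s x y - qc h μ τ n (n + 1) s xm y) * lam ^ (n + 1)
          * W (s + ((n + 1 : ℕ) : ℂ) * h) x y = 0 := by
      rw [qc_zero_of_lt h μ τ n (n + 1) (by omega), qc_zero_of_lt h μ τ n (n + 1) (by omega)]
      ring
    have hc0 : qc h μ τ (n + 1) 0 s x y * lam ^ 0 * W (s + ((0 : ℕ) : ℂ) * h) x y
        = (qc h μ τ n 0 s x y - qc h μ τ n 0 s xm y) * lam ^ 0 * W (s + ((0 : ℕ) : ℂ) * h) x y := by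
      simp only [qc]
      rfl
    have hsplit2 : ∑ k ∈ Finset.range (n + 1),
          ((qc h μ τ n (k + 1) s x y - qc h μ τ n (k + 1) s xm y) * lam ^ (k + 1)
              * W (s + ((k + 1 : ℕ) : ℂ) * h) x y
            + qc h μ τ n k s xm y * vp h τ (s + (k : ℂ) * h) x y μ * lam ^ (k + 1)
                * W (s + ((k + 1 : ℕ) : ℂ) * h) x y)
        = (∑ k ∈ Finset.range (n + 1),
            (qc h μ τ n (k + 1) s x y - qc h μ τ n (k + 1) s xm y) * lam ^ (k + 1)
              * W (s + ((k + 1 : ℕ) : ℂ) * h) x y)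
          + ∑ k ∈ Finset.range (n + 1),
              qc h μ τ n k s xm y * vp h τ (s + (k : ℂ) * h) x y μ * lam ^ (k + 1)
                * W (s + ((k + 1 : ℕ) : ℂ) * h) x y := Finset.sum_add_distrib
    linear_combination hL1 + hL2 + hsplit - hR - hsumc - hsplit2 + hA3 - hA2 - hAn - hc0

/-- Expansion of `X[μ]ⁿ` applied to `𝗌w⁺` and `𝘄⁻`, with common coefficients. -/
theorem fay_implies_iterated_X_expansion
    (h : ℂ) (hh : h ≠ 0)
    (τ : ℂ → (ℕ+ → ℂ) → (ℕ+ → ℂ) → ℂ) (hτ : ∀ s x y, τ s x y ≠ 0)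
    (hA : FayA h τ) (hC : FayC h τ)
    (μ : ℂ) (hμ : μ ≠ 0) (n : ℕ) (hn : 1 ≤ n) :
    ∃ q : ℕ → ℂ → (ℕ+ → ℂ) → (ℕ+ → ℂ) → ℂ,
      ∀ lam : ℂ, lam ≠ 0 → ∀ (s : ℂ) (x y : ℕ+ → ℂ),
        ((Xtw h μ lam)^[n] (fun s x y => swp h τ s x y lam) s x y
            = ∑ k ∈ Finset.Icc 1 n,
                q k s x y * lam ^ k * swp h τ (s + (k : ℂ) * h) x y lam)
        ∧ ((Xun h μ)^[n] (fun s x y => swm h τ s x y lam) s x y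
            = ∑ k ∈ Finset.Icc 1 n,
                q k s x y * lam ^ k * swm h τ (s + (k : ℂ) * h) x y lam) := by
  refine ⟨fun k => qc h μ τ n k, ?_⟩
  intro lam hlam s x y
  have hset : Finset.range (n + 1) = insert 0 (Finset.Icc 1 n) := by
    ext k; simp [Finset.mem_Icc]; omega
  have h0notin : (0 : ℕ) ∉ Finset.Icc 1 n := by simp
  constructor
  · have hXtw : Xtw h μ lam = Xop h μ (1 - lam / μ) := rfl
    have H := gen_expand h μ lam (1 - lam / μ) τ (fun s x y => swp h τ s x y lam)
      (fun s x y => key_swp h τ hτ hA μ hμ lam hlam s x y) n s x y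
    rw [hXtw, H]
    rw [hset, Finset.sum_insert h0notin, qc_zero_zero h μ τ n hn s x y]
    simp
  · have hXun : Xun h μ = Xop h μ 1 := by
      funext f s x y; simp [Xun, Xop]
    have H := gen_expand h μ lam 1 τ (fun s x y => swm h τ s x y lam)
      (fun s x y => by rw [one_mul]; exact key_swm h τ hτ hC μ hμ lam hlam s x y) n s x y
    rw [hXun, H]
    rw [hset, Finset.sum_insert h0notin, qc_zero_zero h μ τ n hn s x y]
    simp
end
end

section
/- Let τ satisfy Fay-like identities (B) and (C). Fix a nonzero complex number ν and define, for nonzero λ, the untwisted difference operator (Y_ν g)(s,x,y) := g(s,x,y) − g(s, x, y−ℏ[ν]) and the twisted difference operator (Y_{ν,λ}f)(s,x,y) := f(s,x,y) − (1−ν/λ)·f(s, x, y−ℏ[ν]). Then for every n ≥ 1 there exist functions r_{n,1}, …, r_{n,n} of (s, x, y), independent of λ, such that for all nonzero λ simultaneously: (Y_ν)ⁿw̃⁺(s,x,y;λ) = Σ_{k=1}^{n} r_{n,k}(s,x,y)·λ^{−k}·w̃⁺(s−kℏ, x, y; λ) and (Y_{ν,λ})ⁿw̃⁻(s,x,y;λ)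 = Σ_{k=1}^{n} r_{n,k}(s,x,y)·λ^{−k}·w̃⁻(s−kℏ, x, y; λ), with the same coefficient functions r_{n,k} in both relations. -/
noncomputable section

/-- The untwisted difference operator `Y_ν`. -/
def Yun (h ν : ℂ) (g : ℂ → (ℕ+ → ℂ) → (ℕ+ → ℂ) → ℂ) :
    ℂ → (ℕ+ → ℂ) → (ℕ+ → ℂ) → ℂ :=
  fun s x y => g s x y - g s x (shift h y ν)

/-- The twisted difference operator `Y_{ν,λ}`. -/
def Ytw (h ν lam : ℂ) (f : ℂ → (ℕ+ → ℂ) → (ℕ+ → ℂ) → ℂ) :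
    ℂ → (ℕ+ → ℂ) → (ℕ+ → ℂ) → ℂ :=
  fun s x y => f s x y - (1 - ν / lam) * f s x (shift h y ν)

/- ### Auxiliary lemmas -/

lemma shiftComm (h : ℂ) (y : ℕ+ → ℂ) (a b : ℂ) :
    shift h (shift h y a) b = shift h (shift h y b) a := by
  funext n; simp only [shift]; ring

lemma auxP (a b c d e f g lam ν : ℂ) (hb : b ≠ 0) (hd : d ≠ 0) (hf : f ≠ 0)
    (hlam : lam ≠ 0) (key : lam * (a * d - b * c) = ν * e * g) :
    c / d = a / b - ν * e * f / (b * d) * lam⁻¹ * (g / f) := by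
  field_simp
  linear_combination (-1 : ℂ) * key

lemma auxM (a b d e f p q lam ν : ℂ) (hb : b ≠ 0) (hd : d ≠ 0) (hf : f ≠ 0)
    (hlam : lam ≠ 0) (key : (lam - ν) * b * a = lam * p * d - ν * e * q) :
    (1 - ν / lam) * (a / d) = p / b - ν * e * f / (b * d) * lam⁻¹ * (q / f) := by
  field_simp
  linear_combination key

/-- One-step relation for `w̃⁺`, from Fay identity (C). -/
lemma stepP (h : ℂ) (τ : ℂ → (ℕ+ → ℂ) → (ℕ+ → ℂ) → ℂ)
    (hτ : ∀ s x y, τ s x y ≠ 0) (hC : FayC h τ) (ν : ℂ) (hν : ν ≠ 0)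
    (lam : ℂ) (hlam : lam ≠ 0) (s : ℂ) (x y : ℕ+ → ℂ) :
    wtp h τ s x (shift h y ν) lam
      = wtp h τ s x y lam - vm h τ s x y ν * lam⁻¹ * wtp h τ (s - h) x y lam := by
  have hc := hC s x y lam ν hlam hν
  unfold wtp vm
  exact auxP _ _ _ _ _ _ _ _ _ (hτ s x y) (hτ s x (shift h y ν)) (hτ (s - h) x y)
    hlam hc

/-- One-step relation for `w̃⁻`, from Fay identity (B). -/
lemma stepM (h : ℂ) (τ : ℂ → (ℕ+ → ℂ) → (ℕ+ → ℂ) → ℂ)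
    (hτ : ∀ s x y, τ s x y ≠ 0) (hB : FayB h τ) (ν : ℂ) (hν : ν ≠ 0)
    (lam : ℂ) (hlam : lam ≠ 0) (s : ℂ) (x y : ℕ+ → ℂ) :
    (1 - ν / lam) * wtm h τ s x (shift h y ν) lam
      = wtm h τ s x y lam - vm h τ s x y ν * lam⁻¹ * wtm h τ (s - h) x y lam := by
  have hb := hB s x y lam ν hlam hν
  unfold wtm vm
  rw [shiftComm, show s - h + h = s by ring]
  exact auxM _ _ _ _ _ _ _ _ _ (hτ s x y) (hτ s x (shift h y ν)) (hτ (s - h) x y)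
    hlam (by linear_combination hb)

/-- Coefficients of the iterated expansion, defined recursively. -/
def Rc (h ν : ℂ) (V : ℂ → (ℕ+ → ℂ) → (ℕ+ → ℂ) → ℂ) :
    ℕ → ℕ → ℂ → (ℕ+ → ℂ) → (ℕ+ → ℂ) → ℂ
  | 0, k, _, _, _ => if k = 0 then 1 else 0
  | n + 1, k, s, x, y =>
      (Rc h ν V n k s x y - Rc h ν V n k s x (shift h y ν))
        + (if k = 0 then 0
           else Rc h ν V n (k - 1) s x (shift h y ν) * V (s - ((k - 1 : ℕ) : ℂ) * h) x y)

lemma Rc_vanish (h ν : ℂ) (V : ℂ → (ℕ+ → ℂ) → (ℕ+ → ℂ) → ℂ) :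
    ∀ n k, n < k → ∀ s x y, Rc h ν V n k s x y = 0 := by
  intro n
  induction n with
  | zero =>
    intro k hk s x y
    simp only [Rc, if_neg (by omega : ¬ k = 0)]
  | succ n ih =>
    intro k hk s x y
    simp only [Rc, ih k (by omega), ih (k - 1) (by omega), if_neg (by omega : ¬ k = 0),
      zero_mul, sub_zero, add_zero, sub_self, zero_add]

lemma Rc_zero (h ν : ℂ) (V : ℂ → (ℕ+ → ℂ) → (ℕ+ → ℂ) → ℂ) :
    ∀ n, 1 ≤ n → ∀ s x y, Rc h ν V n 0 s x y = 0 := by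
  intro n
  induction n with
  | zero => omega
  | succ n ih =>
    intro _ s x y
    rcases Nat.eq_zero_or_pos n with rfl | hn
    · simp [Rc]
    · simp [Rc, ih hn]

/-- Abstract iteration lemma. -/
lemma iter_key (h ν lam : ℂ) (V w : ℂ → (ℕ+ → ℂ) → (ℕ+ → ℂ) → ℂ) (c : ℂ)
    (O : (ℂ → (ℕ+ → ℂ) → (ℕ+ → ℂ) → ℂ) → (ℂ → (ℕ+ → ℂ) → (ℕ+ → ℂ) → ℂ))
    (hO : ∀ g s x y, O g s x y = g s x y - c * g s x (shift h y ν))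
    (hw : ∀ s x y, c * w s x (shift h y ν)
            = w s x y - V s x y * lam⁻¹ * w (s - h) x y) :
    ∀ n s x y, (O^[n] w) s x y
      = ∑ k ∈ Finset.range (n + 1),
          Rc h ν V n k s x y * lam⁻¹ ^ k * w (s - (k : ℂ) * h) x y := by
  intro n
  induction n with
  | zero =>
    intro s x y
    simp [Rc]
  | succ n ih =>
    intro s x y
    rw [Function.iterate_succ_apply', hO, ih s x y, ih s x (shift h y ν),
      Finset.mul_sum]
    have h2 : ∀ k ∈ Finset.range (n + 1),
        c * (Rc h ν V n k s x (shift h y ν) * lam⁻¹ ^ k * w (s - (k : ℂ) * h) x (shift h y ν))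
          = Rc h ν V n k s x (shift h y ν) * lam⁻¹ ^ k * w (s - (k : ℂ) * h) x y
            - Rc h ν V n k s x (shift h y ν) * V (s - (k : ℂ) * h) x y * lam⁻¹ ^ (k + 1)
                * w (s - (k : ℂ) * h - h) x y := by
      intro k _
      have hwk := hw (s - (k : ℂ) * h) x y
      linear_combination (Rc h ν V n k s x (shift h y ν) * lam⁻¹ ^ k) * hwk
    rw [Finset.sum_congr rfl h2, Finset.sum_sub_distrib]
    have expand : ∀ k ∈ Finset.range (n + 2),
        Rc h ν V (n + 1) k s x y * lam⁻¹ ^ k * w (s - (k : ℂ) * h) x y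
          = (Rc h ν V n k s x y * lam⁻¹ ^ k * w (s - (k : ℂ) * h) x y
              - Rc h ν V n k s x (shift h y ν) * lam⁻¹ ^ k * w (s - (k : ℂ) * h) x y)
            + (if k = 0 then 0
               else Rc h ν V n (k - 1) s x (shift h y ν) * V (s - ((k - 1 : ℕ) : ℂ) * h) x y
                      * lam⁻¹ ^ k * w (s - (k : ℂ) * h) x y) := by
      intro k _
      rcases Nat.eq_zero_or_pos k with rfl | hk
      · norm_num [Rc, sub_mul]
      · simp only [Rc, if_neg (by omega : ¬ k = 0)]
        ring
    rw [Finset.sum_congr rfl expand, Finset.sum_add_distrib, Finset.sum_sub_distrib,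
      Finset.sum_range_succ (fun k => Rc h ν V n k s x y * lam⁻¹ ^ k * w (s - (k : ℂ) * h) x y) (n + 1),
      Finset.sum_range_succ (fun k => Rc h ν V n k s x (shift h y ν) * lam⁻¹ ^ k * w (s - (k : ℂ) * h) x y) (n + 1),
      Rc_vanish h ν V n (n + 1) (by omega) s x y, Rc_vanish h ν V n (n + 1) (by omega) s x (shift h y ν),
      Finset.sum_range_succ' (fun k => if k = 0 then (0 : ℂ)
        else Rc h ν V n (k - 1) s x (shift h y ν) * V (s - ((k - 1 : ℕ) : ℂ) * h) x y
               * lam⁻¹ ^ k * w (s - (k : ℂ) * h) x y) (n + 1)]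
    have hshift : ∀ i ∈ Finset.range (n + 1),
        (if i + 1 = 0 then (0 : ℂ)
         else Rc h ν V n (i + 1 - 1) s x (shift h y ν) * V (s - ((i + 1 - 1 : ℕ) : ℂ) * h) x y
                * lam⁻¹ ^ (i + 1) * w (s - ((i + 1 : ℕ) : ℂ) * h) x y)
          = Rc h ν V n i s x (shift h y ν) * V (s - (i : ℂ) * h) x y * lam⁻¹ ^ (i + 1)
              * w (s - (i : ℂ) * h - h) x y := by
      intro i _
      rw [if_neg (Nat.succ_ne_zero i), Nat.add_sub_cancel,
        show s - ((i + 1 : ℕ) : ℂ) * h = s - (i : ℂ) * h - h by push_cast; ring]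
    rw [Finset.sum_congr rfl hshift]
    simp only [if_true]
    ring

/-- Expansion of `Y[ν]ⁿ` applied to `w̃⁺` and `w̃⁻`, with common coefficients. -/
theorem fay_implies_iterated_Y_expansion
    (h : ℂ) (hh : h ≠ 0)
    (τ : ℂ → (ℕ+ → ℂ) → (ℕ+ → ℂ) → ℂ) (hτ : ∀ s x y, τ s x y ≠ 0)
    (hB : FayB h τ) (hC : FayC h τ)
    (ν : ℂ) (hν : ν ≠ 0) (n : ℕ) (hn : 1 ≤ n) :
    ∃ r : ℕ → ℂ → (ℕ+ → ℂ) → (ℕ+ → ℂ) → ℂ,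
      ∀ lam : ℂ, lam ≠ 0 → ∀ (s : ℂ) (x y : ℕ+ → ℂ),
        ((Yun h ν)^[n] (fun s x y => wtp h τ s x y lam) s x y
            = ∑ k ∈ Finset.Icc 1 n,
                r k s x y * lam⁻¹ ^ k * wtp h τ (s - (k : ℂ) * h) x y lam)
        ∧ ((Ytw h ν lam)^[n] (fun s x y => wtm h τ s x y lam) s x y
            = ∑ k ∈ Finset.Icc 1 n,
                r k s x y * lam⁻¹ ^ k * wtm h τ (s - (k : ℂ) * h) x y lam) := by
  set V : ℂ → (ℕ+ → ℂ) → (ℕ+ → ℂ) → ℂ := fun s x y => vm h τ s x y ν with hV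
  refine ⟨fun k s x y => Rc h ν V n k s x y, ?_⟩
  intro lam hlam s x y
  have hset : Finset.range (n + 1) = insert 0 (Finset.Icc 1 n) := by
    ext k; simp only [Finset.mem_range, Finset.mem_insert, Finset.mem_Icc]; omega
  have hnotmem : (0 : ℕ) ∉ Finset.Icc 1 n := by simp
  constructor
  · have := iter_key h ν lam V (fun s x y => wtp h τ s x y lam) 1 (Yun h ν)
      (fun g s x y => by simp [Yun])
      (fun s x y => by simpa using stepP h τ hτ hC ν hν lam hlam s x y)
      n s x y
    rw [this, hset, Finset.sum_insert hnotmem, Rc_zero h ν V n hn, zero_mul, zero_mul,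
      zero_add]
  · have := iter_key h ν lam V (fun s x y => wtm h τ s x y lam) (1 - ν / lam) (Ytw h ν lam)
      (fun g s x y => rfl)
      (fun s x y => stepM h τ hτ hB ν hν lam hlam s x y)
      n s x y
    rw [this, hset, Finset.sum_insert hnotmem, Rc_zero h ν V n hn, zero_mul, zero_mul,
      zero_add]
end
end

section
/- Let τ satisfy Fay-like identities (A) and (C). Then for all s, x, y and all nonzero complex numbers λ, μ, the two 'transfer coefficient' ratios agree: (𝗌w⁺(s,x,y;λ) − (1−λ/μ)·𝗌w⁺(s, x−ℏ[μ⁻¹], y; λ)) / (λ·𝗌w⁺(s+ℏ, x, y; λ)) = (𝘄⁻(s,x,y;λ) − 𝘄⁻(s, x−ℏ[μ⁻¹], y; λ)) / (λ·𝘄⁻(s+ℏ, x, y; λ)), and their common value is v⁺(s,x,y;μ), which is independent of λ. -/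
noncomputable section

/-- The two transfer-coefficient ratios for `𝗌w⁺` and `𝘄⁻` agree and equal `v⁺(μ)`. -/
theorem transfer_coefficient_plus
    (h : ℂ) (hh : h ≠ 0)
    (τ : ℂ → (ℕ+ → ℂ) → (ℕ+ → ℂ) → ℂ) (hτ : ∀ s x y, τ s x y ≠ 0)
    (hA : FayA h τ) (hC : FayC h τ)
    (s : ℂ) (x y : ℕ+ → ℂ) (lam μ : ℂ) (hlam : lam ≠ 0) (hμ : μ ≠ 0) :
    ((swp h τ s x y lam - (1 - lam / μ) * swp h τ s (shift h x μ⁻¹) y lam)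
        / (lam * swp h τ (s + h) x y lam)
      = (swm h τ s x y lam - swm h τ s (shift h x μ⁻¹) y lam)
        / (lam * swm h τ (s + h) x y lam))
    ∧ ((swp h τ s x y lam - (1 - lam / μ) * swp h τ s (shift h x μ⁻¹) y lam)
        / (lam * swp h τ (s + h) x y lam)
      = vp h τ s x y μ) := by
  have hcomm : shift h (shift h x lam⁻¹) μ⁻¹ = shift h (shift h x μ⁻¹) lam⁻¹ := by
    funext n; simp only [shift]; ring
  have hA' := hA s x y lam μ hlam hμ
  rw [hcomm] at hA'
  have hC' := hC (s + h) x y μ lam hμ hlam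
  have e1 : s + h - h = s := by ring
  have e2 : s + h + h = s + 2 * h := by ring
  rw [e1, e2] at hC'
  have t1 := hτ s (shift h x lam⁻¹) y
  have t2 := hτ (s + h) x y
  have t3 := hτ s (shift h (shift h x μ⁻¹) lam⁻¹) y
  have t4 := hτ (s + h) (shift h x μ⁻¹) y
  have t5 := hτ (s + h) (shift h x lam⁻¹) y
  have t6 := hτ (s + 2 * h) x y
  have t7 := hτ (s + h) x (shift h y lam)
  have t8 := hτ (s + h) (shift h x μ⁻¹) (shift h y lam)
  have t9 := hτ (s + 2 * h) x (shift h y lam)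
  have t10 := hτ s (shift h x μ⁻¹) y
  have h2 : (swp h τ s x y lam - (1 - lam / μ) * swp h τ s (shift h x μ⁻¹) y lam)
        / (lam * swp h τ (s + h) x y lam) = vp h τ s x y μ := by
    unfold swp vp
    rw [e2]
    set a := τ s (shift h x lam⁻¹) y
    set b := τ (s + h) x y
    set c := τ s (shift h (shift h x μ⁻¹) lam⁻¹) y
    set d := τ (s + h) (shift h x μ⁻¹) y
    set e := τ (s + h) (shift h x lam⁻¹) y
    set f := τ (s + 2 * h) x y
    set j := τ s (shift h x μ⁻¹) y
    field_simp
    linear_combination hA'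
  have h3 : (swm h τ s x y lam - swm h τ s (shift h x μ⁻¹) y lam)
        / (lam * swm h τ (s + h) x y lam) = vp h τ s x y μ := by
    unfold swm vp
    rw [e2]
    set b := τ (s + h) x y
    set d := τ (s + h) (shift h x μ⁻¹) y
    set f := τ (s + 2 * h) x y
    set g := τ (s + h) x (shift h y lam)
    set k := τ (s + h) (shift h x μ⁻¹) (shift h y lam)
    set i := τ (s + 2 * h) x (shift h y lam)
    set j := τ s (shift h x μ⁻¹) y
    field_simp
    linear_combination hC'
  exact ⟨h2.trans h3.symm, h2⟩
end
end

section
/- Let τ satisfy Fay-like identities (B) and (C). Then for all s, x, y and all nonzero complex numbers λ, ν, the two 'transfer coefficient' ratios agree: (w̃⁺(s,x,y;λ) − w̃⁺(s, x, y−ℏ[ν]; λ)) / (λ⁻¹·w̃⁺(s−ℏ, x, y; λ)) = (w̃⁻(s,x,y;λ) − (1−ν/λ)·w̃⁻(s, x, y−ℏ[ν]; λ)) / (λ⁻¹·w̃⁻(s−ℏ, x, y; λ)), and their common value is v⁻(s,x,y;ν), which is independent of λ. -/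
noncomputable section

/-- The two transfer-coefficient ratios for `w̃⁺` and `w̃⁻` agree and equal `v⁻(ν)`. -/
theorem transfer_coefficient_minus
    (h : ℂ) (hh : h ≠ 0)
    (τ : ℂ → (ℕ+ → ℂ) → (ℕ+ → ℂ) → ℂ) (hτ : ∀ s x y, τ s x y ≠ 0)
    (hB : FayB h τ) (hC : FayC h τ)
    (s : ℂ) (x y : ℕ+ → ℂ) (lam ν : ℂ) (hlam : lam ≠ 0) (hν : ν ≠ 0) :
    ((wtp h τ s x y lam - wtp h τ s x (shift h y ν) lam)
        / (lam⁻¹ * wtp h τ (s - h) x y lam)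
      = (wtm h τ s x y lam - (1 - ν / lam) * wtm h τ s x (shift h y ν) lam)
        / (lam⁻¹ * wtm h τ (s - h) x y lam))
    ∧ ((wtp h τ s x y lam - wtp h τ s x (shift h y ν) lam)
        / (lam⁻¹ * wtp h τ (s - h) x y lam)
      = vm h τ s x y ν) := by
  have hcomm : shift h (shift h y lam) ν = shift h (shift h y ν) lam := by
    funext n; simp only [shift]; ring
  have hC' := hC s x y lam ν hlam hν
  have hB' := hB s x y lam ν hlam hν
  rw [hcomm] at hB'
  have t1 := hτ s x y
  have t2 := hτ s x (shift h y ν)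
  have t3 := hτ (s - h) x y
  have t4 := hτ (s - h) (shift h x lam⁻¹) y
  have t5 := hτ s x (shift h y lam)
  set A := τ s (shift h x lam⁻¹) y with hA
  set B := τ s (shift h x lam⁻¹) (shift h y ν) with hBd
  set D := τ (s - h) (shift h x lam⁻¹) y with hD
  set E := τ (s + h) x (shift h y ν) with hE
  set F := τ (s + h) x (shift h y lam) with hF
  set G := τ (s + h) x (shift h (shift h y ν) lam) with hG
  set T1 := τ s x y
  set T2 := τ s x (shift h y ν)
  set T3 := τ (s - h) x y
  set K := τ s x (shift h y lam)
  have e2 : (wtp h τ s x y lam - wtp h τ s x (shift h y ν) lam)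
        / (lam⁻¹ * wtp h τ (s - h) x y lam) = vm h τ s x y ν := by
    unfold wtp vm
    have expand : (A / T1 - B / T2) / (lam⁻¹ * (D / T3))
        = (lam * A * T2 - lam * T1 * B) * T3 / (T1 * T2 * D) := by
      field_simp
    rw [expand, show lam * A * T2 - lam * T1 * B = ν * E * D from by linear_combination hC']
    change ν * E * D * T3 / (T1 * T2 * D) = ν * E * T3 / (T1 * T2)
    rw [div_eq_div_iff (mul_ne_zero (mul_ne_zero t1 t2) t4) (mul_ne_zero t1 t2)]; ring
  have e1 : (wtm h τ s x y lam - (1 - ν / lam) * wtm h τ s x (shift h y ν) lam)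
        / (lam⁻¹ * wtm h τ (s - h) x y lam) = vm h τ s x y ν := by
    unfold wtm vm
    simp only [sub_add_cancel]
    have expand : (F / T1 - (1 - ν / lam) * (G / T2)) / (lam⁻¹ * (K / T3))
        = (lam * F * T2 - (lam - ν) * G * T1) * T3 / (T1 * T2 * K) := by
      field_simp
    rw [expand, show lam * F * T2 - (lam - ν) * G * T1 = ν * E * K from by linear_combination -hB']
    change ν * E * K * T3 / (T1 * T2 * K) = ν * E * T3 / (T1 * T2)
    rw [div_eq_div_iff (mul_ne_zero (mul_ne_zero t1 t2) t5) (mul_ne_zero t1 t2)]; ring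
  exact ⟨e2.trans e1.symm, e2⟩
end
end
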